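/- Let G be a digraph and let S ⊆ V(G) be such that the induced subdigraph G[S] is acyclic. Then χ⃗(G/S) ≥ χ⃗(G), where G/S is the digraph obtained from G by contracting S to a single vertex (the vertex set is (V(G) − S) ∪ {s*}, and there is an arc between two vertices of G/S whenever G has an arc between the corresponding sets of original vertices, loops being discarded). -/

import Mathlib

/-- A (simple) digraph: a finite vertex set (of naturals) together with a finite
set of arcs between distinct vertices. -/
structure FDigraph where
  verts : Finset ℕ
  arcs : Finset (ℕ × ℕ)
  wf : ∀ a ∈ arcs, a.1 ∈ verts ∧ a.2 ∈ verts ∧ a.1 ≠ a.2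

namespace FDigraph

/-- Smart constructor: keeps only the legal arcs. -/
def mk' (V : Finset ℕ) (A : Finset (ℕ × ℕ)) : FDigraph where
  verts := V
  arcs := A.filter fun a => a.1 ∈ V ∧ a.2 ∈ V ∧ a.1 ≠ a.2
  wf := by
    intro a ha
    simp only [Finset.mem_filter] at ha
    exact ha.2

/-- A directed cycle, given as its (nonempty, duplicate-free) list of vertices:
every cyclically consecutive pair is an arc. -/
def IsDicycle (G : FDigraph) (l : List ℕ) : Prop :=
  l ≠ [] ∧ l.Nodup ∧ ∀ p ∈ l.zip (l.rotate 1), p ∈ G.arcs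

/-- A set of vertices is acyclic if it contains no directed cycle. -/
def AcyclicOn (G : FDigraph) (S : Set ℕ) : Prop :=
  ¬ ∃ l, G.IsDicycle l ∧ ∀ v ∈ l, v ∈ S

/-- A `k`-dicolouring: colours `0, …, k-1`, every colour class acyclic. -/
def IsDicolouring (G : FDigraph) (k : ℕ) (φ : ℕ → ℕ) : Prop :=
  (∀ v ∈ G.verts, φ v < k) ∧ ∀ c, G.AcyclicOn {v | φ v = c}

/-- The dichromatic number. -/
noncomputable def dichi (G : FDigraph) : ℕ := sInf {k | ∃ φ, G.IsDicolouring k φ}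

/-- Subdigraph relation. -/
def Subdigraph (H G : FDigraph) : Prop := H.verts ⊆ G.verts ∧ H.arcs ⊆ G.arcs

/-- `G` is `k`-dicritical. -/
def Dicritical (G : FDigraph) (k : ℕ) : Prop :=
  G.dichi = k ∧ ∀ H, Subdigraph H G → H ≠ G → H.dichi ≤ k - 1

/-- Induced subdigraph on a finite set of vertices. -/
def induce (G : FDigraph) (S : Finset ℕ) : FDigraph := mk' (G.verts ∩ S) G.arcs

def outDeg (G : FDigraph) (v : ℕ) : ℕ := (G.arcs.filter fun a => a.1 = v).card
def inDeg (G : FDigraph) (v : ℕ) : ℕ := (G.arcs.filter fun a => a.2 = v).card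
def deg (G : FDigraph) (v : ℕ) : ℕ := G.outDeg v + G.inDeg v

/-- Weak adjacency: an arc in either direction. -/
def wadj (G : FDigraph) (u v : ℕ) : Prop := (u, v) ∈ G.arcs ∨ (v, u) ∈ G.arcs

/-- Weak reachability. -/
def WReach (G : FDigraph) : ℕ → ℕ → Prop := Relation.ReflTransGen G.wadj

/-- A digraph is connected when its underlying graph is connected
(the empty digraph counts as connected). -/
def Connected (G : FDigraph) : Prop := ∀ u ∈ G.verts, ∀ v ∈ G.verts, G.WReach u v

/-- The set of connected components. -/
def components (G : FDigraph) : Set (Set ℕ) :=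
  {C | ∃ v ∈ G.verts, C = {u | u ∈ G.verts ∧ G.WReach v u}}

/-- The number of connected components. -/
noncomputable def numComponents (G : FDigraph) : ℕ := G.components.ncard

/-- Isomorphism of digraphs. -/
def Iso (G H : FDigraph) : Prop :=
  ∃ f : ℕ → ℕ, Set.BijOn f ↑G.verts ↑H.verts ∧
    ∀ u ∈ G.verts, ∀ v ∈ G.verts, ((u, v) ∈ G.arcs ↔ (f u, f v) ∈ H.arcs)

/-- The bidirected (complete) digraph `↔K_n`. -/
def completeD (n : ℕ) : FDigraph := mk' (Finset.range n) (Finset.range n ×ˢ Finset.range n)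

/-- The directed cycle `C⃗_n`. -/
def dirCycle (n : ℕ) : FDigraph :=
  mk' (Finset.range n)
    ((Finset.range n ×ˢ Finset.range n).filter fun a => a.2 = (a.1 + 1) % n)

/-- The bidirected cycle `↔C_n`. -/
def biCycle (n : ℕ) : FDigraph :=
  mk' (Finset.range n)
    ((Finset.range n ×ˢ Finset.range n).filter fun a =>
      a.2 = (a.1 + 1) % n ∨ a.1 = (a.2 + 1) % n)

/-- The Dirac join of `↔K_{k-2}` (on `{0,…,k-3}`) and the directed triangle
`C⃗_3` (on `{k-2, k-1, k}`). -/
def diracJoinExample (k : ℕ) : FDigraph :=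
  mk' (Finset.range (k + 1))
    ((Finset.range (k + 1) ×ˢ Finset.range (k + 1)).filter fun a =>
      a.1 < k - 2 ∨ a.2 < k - 2 ∨ a.2 = (if a.1 = k then k - 2 else a.1 + 1))

end FDigraph

namespace FDigraph

/-- Contraction of the set `S` to the single (new) vertex `s`: arcs are the
projections of arcs of `G`, loops being discarded. -/
def contract (G : FDigraph) (S : Finset ℕ) (s : ℕ) : FDigraph :=
  mk' ((G.verts \ S) ∪ {s})
    (G.arcs.image fun a => (if a.1 ∈ S then s else a.1, if a.2 ∈ S then s else a.2))

end FDigraph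

lemma succ_mod_aux (d k : ℕ) : (k+1) % d = (k % d + 1) % d := by
  conv_lhs => rw [← Nat.div_add_mod k d]
  rw [Nat.add_assoc, Nat.mul_add_mod]

lemma mem_zip_rot {l : List ℕ} {p : ℕ × ℕ} :
    p ∈ l.zip (l.rotate 1) ↔
      ∃ i, ∃ h : i < l.length,
        p = (l[i], l[(i+1) % l.length]'(Nat.mod_lt _ (by omega))) := by
  have hlen : (l.zip (l.rotate 1)).length = l.length := by simp
  constructor
  · intro hp
    rw [List.mem_iff_getElem] at hp
    obtain ⟨i, hi, hpe⟩ := hp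
    rw [hlen] at hi
    refine ⟨i, hi, ?_⟩
    rw [← hpe, List.getElem_zip, List.getElem_rotate]
  · rintro ⟨i, hi, rfl⟩
    rw [List.mem_iff_getElem]
    refine ⟨i, by rwa [hlen], ?_⟩
    rw [List.getElem_zip, List.getElem_rotate]

/-- iterated periodicity -/
lemma per_iter {c : ℕ → ℕ} {m : ℕ} (hper : ∀ i, c (i + m) = c i) :
    ∀ q p, c (p + q * m) = c p := by
  intro q
  induction q with
  | zero => simp
  | succ q ih =>
    intro p
    have : p + (q+1) * m = (p + q * m) + m := by ring
    rw [this, hper, ih]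

/-- Main extraction: a periodic pseudo-walk (arcs or loops) that is not constant
contains a dicycle. -/
lemma extract (G : FDigraph) :
    ∀ m : ℕ, ∀ c : ℕ → ℕ, 1 ≤ m →
    (∀ i, c (i + m) = c i) →
    (∀ i, (c i, c (i+1)) ∈ G.arcs ∨ c i = c (i+1)) →
    (∃ i j, c i ≠ c j) →
    ∃ l, G.IsDicycle l ∧ ∀ v ∈ l, ∃ j, v = c j := by
  intro m
  induction m using Nat.strong_induction_on with
  | _ m IH =>
  intro c hm hper hstep hne
  -- m = 1 is impossible
  have hconst1 : m = 1 → False := by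
    intro h1
    obtain ⟨i, j, hij⟩ := hne
    have : ∀ i, c i = c 0 := by
      intro i
      induction i with
      | zero => rfl
      | succ i ih => rw [← ih]; have := hper i; rw [h1] at this; exact this
    exact hij ((this i).trans (this j).symm)
  have hm2 : 2 ≤ m := by
    rcases Nat.lt_or_ge m 2 with h | h
    · exfalso; exact hconst1 (by omega)
    · exact h
  by_cases hinj : ∀ i < m, ∀ j < m, c i = c j → i = j
  · -- injective on a period: build the cycle directly
    refine ⟨(List.range m).map c, ⟨?_, ?_, ?_⟩, ?_⟩
    · simp; omega
    · refine List.Nodup.map_on ?_ List.nodup_range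
      intro i hi j hj hc
      simp only [List.mem_range] at hi hj
      exact hinj i hi j hj hc
    · intro p hp
      rw [mem_zip_rot] at hp
      obtain ⟨i, hi, rfl⟩ := hp
      have hlen : ((List.range m).map c).length = m := by simp
      simp only [hlen] at hi ⊢
      have e1 : ((List.range m).map c)[i] = c i := by simp
      have hi1 : (i+1) % m < m := Nat.mod_lt _ (by omega)
      have e2 : ((List.range m).map c)[(i+1) % m]'(by simp [hlen]; omega) = c ((i+1) % m) := by simp
      rw [e1, e2]
      rcases Nat.lt_or_ge (i+1) m with h | h
      · rw [Nat.mod_eq_of_lt h]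
        rcases hstep i with ha | he
        · exact ha
        · exact absurd (hinj i hi (i+1) h he) (by omega)
      · have him : i + 1 = m := by omega
        have : (i+1) % m = 0 := by rw [him, Nat.mod_self]
        rw [this]
        have hcm : c (i+1) = c 0 := by rw [him, ← hper 0]; ring_nf
        rcases hstep i with ha | he
        · rw [← hcm]; exact ha
        · have : i = 0 := hinj i hi 0 (by omega) (he.trans hcm)
          omega
    · intro v hv
      simp only [List.mem_map, List.mem_range] at hv
      obtain ⟨j, _, rfl⟩ := hv
      exact ⟨j, rfl⟩
  · push_neg at hinj
    obtain ⟨i0, hi0, j0, hj0, hc0, hne0⟩ := hinj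
    -- normalize to p < q
    obtain ⟨p, q, hpq, hqm, hcpq⟩ : ∃ p q, p < q ∧ q < m ∧ c p = c q := by
      rcases Nat.lt_or_ge i0 j0 with h | h
      · exact ⟨i0, j0, h, hj0, hc0⟩
      · exact ⟨j0, i0, by omega, hi0, hc0.symm⟩
    set d := q - p with hd
    set e := m - d with he
    have hd1 : 1 ≤ d := by omega
    have hdm : d < m := by omega
    have he1 : 1 ≤ e := by omega
    have hem : e < m := by omega
    set c₁ : ℕ → ℕ := fun k => c (p + k % d) with hc₁
    set c₂ : ℕ → ℕ := fun k => c (q + k % e) with hc₂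
    have hper₁ : ∀ k, c₁ (k + d) = c₁ k := by
      intro k; simp only [hc₁, Nat.add_mod_right]
    have hper₂ : ∀ k, c₂ (k + e) = c₂ k := by
      intro k; simp only [hc₂, Nat.add_mod_right]
    have hstep₁ : ∀ k, (c₁ k, c₁ (k+1)) ∈ G.arcs ∨ c₁ k = c₁ (k+1) := by
      intro k
      have hr : k % d < d := Nat.mod_lt _ (by omega)
      have hsm := succ_mod_aux d k
      have hval : c₁ (k+1) = c (p + k % d + 1) := by
        simp only [hc₁, hsm]
        rcases Nat.lt_or_ge (k % d + 1) d with h | h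
        · rw [Nat.mod_eq_of_lt h]; ring_nf
        · have hkd : k % d + 1 = d := by omega
          rw [hkd, Nat.mod_self]
          have : p + k % d + 1 = q := by omega
          rw [this, Nat.add_zero, ← hcpq]
      rw [hval]
      exact hstep (p + k % d)
    have hstep₂ : ∀ k, (c₂ k, c₂ (k+1)) ∈ G.arcs ∨ c₂ k = c₂ (k+1) := by
      intro k
      have hr : k % e < e := Nat.mod_lt _ (by omega)
      have hsm := succ_mod_aux e k
      have hval : c₂ (k+1) = c (q + k % e + 1) := by
        simp only [hc₂, hsm]
        rcases Nat.lt_or_ge (k % e + 1) e with h | h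
        · rw [Nat.mod_eq_of_lt h]; ring_nf
        · have hke : k % e + 1 = e := by omega
          rw [hke, Nat.mod_self, Nat.add_zero]
          have h2 : q + k % e + 1 = p + m := by omega
          rw [h2, hper, hcpq]
      rw [hval]
      exact hstep (q + k % e)
    by_cases h1 : ∃ a b, c₁ a ≠ c₁ b
    · obtain ⟨l, hl, hlv⟩ := IH d hdm c₁ hd1 hper₁ hstep₁ h1
      refine ⟨l, hl, ?_⟩
      intro v hv
      obtain ⟨j, rfl⟩ := hlv v hv
      exact ⟨p + j % d, rfl⟩
    by_cases h2 : ∃ a b, c₂ a ≠ c₂ b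
    · obtain ⟨l, hl, hlv⟩ := IH e hem c₂ he1 hper₂ hstep₂ h2
      refine ⟨l, hl, ?_⟩
      intro v hv
      obtain ⟨j, rfl⟩ := hlv v hv
      exact ⟨q + j % e, rfl⟩
    · -- both constant → c constant → contradiction
      push_neg at h1 h2
      exfalso
      have hco : ∀ t, p ≤ t → t < p + m → c t = c p := by
        intro t ht1 ht2
        rcases Nat.lt_or_ge t q with h | h
        · have : c t = c₁ (t - p) := by
            simp only [hc₁]
            rw [Nat.mod_eq_of_lt (by omega)]
            congr 1; omega
          rw [this, h1 (t - p) 0]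
          simp [hc₁]
        · have : c t = c₂ (t - q) := by
            simp only [hc₂]
            rw [Nat.mod_eq_of_lt (by omega)]
            congr 1; omega
          rw [this, h2 (t - q) 0]
          simp [hc₂, hcpq]
      have hcall : ∀ t, c t = c p := by
        intro t
        set n := t + p * m - p with hn
        have hge : p ≤ t + p * m := by nlinarith
        have e2 : p + n % m + (n / m) * m = t + p * m := by
          have h := Nat.mod_add_div' n m
          omega
        have h1' : c t = c (p + n % m + (n / m) * m) := by
          rw [e2]; exact (per_iter hper p t).symm
        have h2' : c (p + n % m + (n / m) * m) = c (p + n % m) :=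
          per_iter hper (n / m) (p + n % m)
        rw [h1', h2']
        exact hco _ (by omega) (by have := Nat.mod_lt n (show 0 < m by omega); omega)
      obtain ⟨a, b, hab⟩ := hne
      exact hab ((hcall a).trans (hcall b).symm)

lemma singleton_acyclic (G : FDigraph) (T : Set ℕ) (hT : ∀ a ∈ T, ∀ b ∈ T, a = b) :
    G.AcyclicOn T := by
  rintro ⟨l, ⟨hl0, hnd, hst⟩, hmem⟩
  obtain ⟨x, t, rfl⟩ := List.exists_cons_of_ne_nil hl0
  cases t with
  | nil =>
    have hx : (x, x) ∈ [x].zip ([x].rotate 1) := by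
      simp [List.rotate_singleton]
    have harc := hst _ hx
    exact (G.wf _ harc).2.2 rfl
  | cons y t' =>
    have hxy : x = y := hT x (hmem x (by simp)) y (hmem y (by simp))
    rw [List.nodup_cons] at hnd
    exact hnd.1 (by simp [hxy])

lemma exists_colouring (G : FDigraph) : ∃ k φ, G.IsDicolouring k φ := by
  refine ⟨G.verts.sup id + 1, id, ?_, ?_⟩
  · intro v hv
    have := Finset.le_sup (f := id) hv
    simpa using Nat.lt_succ_of_le this
  · intro c
    apply singleton_acyclic
    intro a ha b hb
    simp only [Set.mem_setOf_eq, id] at ha hb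
    omega

/-- contracting an acyclic set does not decrease the dichromatic
number. -/
theorem contract_acyclic (G : FDigraph) (S : Finset ℕ) (hS : S ⊆ G.verts)
    (hac : G.AcyclicOn ↑S) (s : ℕ) (hs : s ∉ G.verts) :
    G.dichi ≤ (G.contract S s).dichi := by
  set H := G.contract S s with hH
  unfold FDigraph.dichi
  apply csInf_le_csInf (OrderBot.bddBelow _)
  · obtain ⟨k, φ, hφ⟩ := exists_colouring H
    exact ⟨k, φ, hφ⟩
  · rintro k ⟨φ, hφb, hφa⟩
    refine ⟨fun v => if v ∈ S then φ s else φ v, ?_, ?_⟩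
    · intro v hv
      by_cases hvS : v ∈ S
      · simp only [hvS, if_pos]
        apply hφb
        simp [hH, FDigraph.contract, FDigraph.mk']
      · simp only [hvS, if_neg, ite_false]
        apply hφb
        simp [hH, FDigraph.contract, FDigraph.mk', hv, hvS]
    · intro col
      rintro ⟨l, ⟨hl0, hnd, hst⟩, hcol⟩
      simp only [Set.mem_setOf_eq] at hcol
      by_cases hallS : ∀ v ∈ l, v ∈ S
      · exact hac ⟨l, ⟨hl0, hnd, hst⟩, fun v hv => by simpa using hallS v hv⟩
      push_neg at hallS
      obtain ⟨v₀, hv₀l, hv₀S⟩ := hallS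
      have hn : 0 < l.length := List.length_pos_iff.mpr hl0
      set n := l.length with hnn
      have hlst : ∀ i (hi : i < n), (l[i], l[(i+1) % n]'(Nat.mod_lt _ (by omega))) ∈ G.arcs := by
        intro i hi
        exact hst _ (mem_zip_rot.mpr ⟨i, hi, rfl⟩)
      have hvl : ∀ v ∈ l, v ∈ G.verts := by
        intro v hv
        rw [List.mem_iff_getElem] at hv
        obtain ⟨i, hi, rfl⟩ := hv
        exact (G.wf _ (hlst i hi)).1
      set f : ℕ → ℕ := fun v => if v ∈ S then s else v with hf
      set g : ℕ → ℕ := fun i => l.getD (i % n) 0 with hg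
      have hgE : ∀ i, g i = l[i % n]'(Nat.mod_lt _ hn) :=
        fun i => List.getD_eq_getElem l 0 (Nat.mod_lt _ hn)
      have hgmem : ∀ i, g i ∈ l := by
        intro i; rw [hgE]; exact List.getElem_mem _
      set c : ℕ → ℕ := fun i => f (g i) with hc
      have hper : ∀ i, c (i + n) = c i := by
        intro i; simp only [hc, hg, Nat.add_mod_right]
      have hgarc : ∀ i, (g i, g (i+1)) ∈ G.arcs := by
        intro i
        have h2 : g (i+1) = l[(i % n + 1) % n]'(Nat.mod_lt _ hn) := by
          rw [hg]
          simp only []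
          rw [succ_mod_aux n i]
          exact List.getD_eq_getElem l 0 (Nat.mod_lt _ hn)
        rw [hgE i, h2]
        exact hlst (i % n) (Nat.mod_lt _ hn)
      have hfV : ∀ v ∈ G.verts, f v ∈ H.verts := by
        intro v hv
        by_cases hvS : v ∈ S
        · simp [hH, FDigraph.contract, FDigraph.mk', hf, hvS]
        · simp [hH, FDigraph.contract, FDigraph.mk', hf, hvS, hv]
      have hstep : ∀ i, (c i, c (i+1)) ∈ H.arcs ∨ c i = c (i+1) := by
        intro i
        by_cases hfe : f (g i) = f (g (i+1))
        · right; exact hfe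
        · left
          show (f (g i), f (g (i+1))) ∈ H.arcs
          have harc := hgarc i
          have hu := (G.wf _ harc).1
          have hv := (G.wf _ harc).2.1
          simp only [hH, FDigraph.contract, FDigraph.mk']
          refine Finset.mem_filter.mpr ⟨Finset.mem_image.mpr ⟨(g i, g (i+1)), harc, rfl⟩, ?_, ?_, hfe⟩
          · exact hfV _ hu
          · exact hfV _ hv
      have hne' : ∃ i j, c i ≠ c j := by
        obtain ⟨i₀, hi₀, hv₀⟩ := List.mem_iff_getElem.mp hv₀l
        have hgi₀ : g i₀ = v₀ := by
          rw [hgE]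
          simp only [Nat.mod_eq_of_lt (show i₀ < n from hi₀)]
          exact hv₀
        by_cases hex : ∃ u ∈ l, u ∈ S
        · obtain ⟨u, hul, huS⟩ := hex
          obtain ⟨j₀, hj₀, hu⟩ := List.mem_iff_getElem.mp hul
          have hgj₀ : g j₀ = u := by
            rw [hgE]
            simp only [Nat.mod_eq_of_lt (show j₀ < n from hj₀)]
            exact hu
          refine ⟨i₀, j₀, ?_⟩
          simp only [hc, hgi₀, hgj₀, hf]
          rw [if_neg hv₀S, if_pos huS]
          intro hcon
          exact hs (hcon ▸ hvl v₀ hv₀l)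
        · push_neg at hex
          have hn2 : 2 ≤ n := by
            by_contra hcon
            have hn1 : n = 1 := by omega
            have := hlst 0 (by omega)
            have := (G.wf _ this).2.2
            simp [hn1] at this
          refine ⟨0, 1, ?_⟩
          have hg0 : g 0 = l[0]'(by omega) := by
            rw [hgE]
            simp only [Nat.zero_mod]
          have hg1 : g 1 = l[1]'(by omega) := by
            rw [hgE]
            simp only [Nat.mod_eq_of_lt (show 1 < n by omega)]
          simp only [hc, hg0, hg1, hf]
          rw [if_neg (hex _ (List.getElem_mem _)), if_neg (hex _ (List.getElem_mem _))]
          intro hcon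
          have := (List.Nodup.getElem_inj_iff hnd).mp hcon
          omega
      obtain ⟨l', hl', hval⟩ := extract H n c hn hper hstep hne'
      refine hφa col ⟨l', hl', ?_⟩
      intro v hv
      obtain ⟨j, rfl⟩ := hval v hv
      simp only [Set.mem_setOf_eq, hc, hf]
      have hcolg := hcol (g j) (hgmem j)
      by_cases hgS : g j ∈ S
      · rw [if_pos hgS]
        rw [if_pos hgS] at hcolg
        exact hcolg
      · rw [if_neg hgS]
        rw [if_neg hgS] at hcolg
        exact hcolg
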